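/- arXiv:1407.1212 — 3 statements merged into one kernel-verified Lean document; each statement's English description precedes it below -/
import Mathlib

section
/- Let x be a random vector with distribution F on ℝ^d such that P(x = z) = 0 for every z, and suppose E[‖x‖] < ∞ for the sake of differentiability arguments (or interpret expectations of the bounded integrands directly). If Q minimizes Q ↦ E[Φ(u, x − Q) − Φ(u, x)] for some u with ‖u‖ < 1, then E[(x − Q)/‖x − Q‖] + u = 0. -/
open RealInnerProductSpace MeasureTheory

lemma hasDerivAt_norm_sub_smul {E : Type*} [NormedAddCommGroup E]
    [InnerProductSpace ℝ E] (c v : E) (hc : c ≠ 0) :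
    HasDerivAt (fun t : ℝ => ‖c - t • v‖) (-⟪‖c‖⁻¹ • c, v⟫) 0 := by
  have hlin : HasDerivAt (fun t : ℝ => c - t • v) (-v) 0 := by
    simpa using ((hasDerivAt_id (0 : ℝ)).smul_const v).const_sub c
  have hsq := hlin.norm_sq
  have h0 : ‖c - (0 : ℝ) • v‖ ^ 2 ≠ 0 := by
    simp [hc]
  have hsqrt := (Real.hasDerivAt_sqrt h0).comp 0 hsq
  have hval : (fun t : ℝ => Real.sqrt (‖c - t • v‖ ^ 2)) = fun t : ℝ => ‖c - t • v‖ := by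
    funext t
    exact Real.sqrt_sq (norm_nonneg _)
  have hcn : ‖c‖ ≠ 0 := norm_ne_zero_iff.mpr hc
  have : HasDerivAt (fun t : ℝ => ‖c - t • v‖)
      (1 / (2 * Real.sqrt (‖c - (0:ℝ) • v‖ ^ 2)) * (2 * ⟪c - (0:ℝ) • v, -v⟫)) 0 := by
    simpa [Function.comp_def, hval] using hsqrt
  convert this using 1
  rw [zero_smul, sub_zero, Real.sqrt_sq (norm_nonneg _), real_inner_smul_left,
    inner_neg_right]
  field_simp

/-- First-order optimality condition for the spatial quantile: if Q minimizes
Q ↦ E[Φ(u, x − Q) − Φ(u, x)] with ‖u‖ < 1 and the distribution of x has no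
atoms, then E[(x − Q)/‖x − Q‖] + u = 0. -/
theorem stmt3 {d : ℕ} (F : Measure (EuclideanSpace ℝ (Fin d)))
    [IsProbabilityMeasure F]
    (hatom : ∀ z : EuclideanSpace ℝ (Fin d), F {z} = 0)
    (hmom : Integrable (fun x : EuclideanSpace ℝ (Fin d) => ‖x‖) F)
    (u Q : EuclideanSpace ℝ (Fin d)) (hu : ‖u‖ < 1)
    (hmin : IsMinOn
      (fun Q' : EuclideanSpace ℝ (Fin d) =>
        ∫ x, ((‖x - Q'‖ + ⟪u, x - Q'⟫) - (‖x‖ + ⟪u, x⟫)) ∂F)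
      Set.univ Q) :
    (∫ x, ‖x - Q‖⁻¹ • (x - Q) ∂F) + u = 0 := by
  classical
  set g : EuclideanSpace ℝ (Fin d) → EuclideanSpace ℝ (Fin d) := fun x => ‖x - Q‖⁻¹ • (x - Q) with hg_def
  have hgmeas : AEStronglyMeasurable g F := by
    apply Measurable.aestronglyMeasurable
    exact ((measurable_norm.comp (measurable_id.sub measurable_const)).inv).smul
      (measurable_id.sub measurable_const)
  have hgint : Integrable g F := by
    refine (integrable_const (1 : ℝ)).mono' hgmeas ?_
    filter_upwards with x
    rw [hg_def]
    simp only [norm_smul, Real.norm_eq_abs, abs_of_nonneg (inv_nonneg.mpr (norm_nonneg _))]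
    rcases eq_or_ne x Q with h | h
    · simp [h]
    · have hn : ‖x - Q‖ ≠ 0 := norm_ne_zero_iff.mpr (sub_ne_zero.mpr h)
      rw [inv_mul_cancel₀ hn]
  have hne : ∀ᵐ x ∂F, x ≠ Q := by
    have : F {x : EuclideanSpace ℝ (Fin d) | ¬ x ≠ Q} = 0 := by
      convert hatom Q using 2
      ext x; simp
    exact (ae_iff).mpr this
  have key : ∀ v : EuclideanSpace ℝ (Fin d), ⟪(∫ x, g x ∂F) + u, v⟫ = 0 := by
    intro v
    set FF : ℝ → EuclideanSpace ℝ (Fin d) → ℝ := fun t x =>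
      (‖x - (Q + t • v)‖ + ⟪u, x - (Q + t • v)⟫) - (‖x‖ + ⟪u, x⟫) with hFF_def
    set F' : EuclideanSpace ℝ (Fin d) → ℝ := fun x => -⟪g x, v⟫ - ⟪u, v⟫ with hF'_def
    have hcont : ∀ t : ℝ, Continuous (FF t) := by
      intro t
      apply Continuous.sub
      · exact (continuous_norm.comp (continuous_id.sub continuous_const)).add
          ((continuous_const.inner (continuous_id.sub continuous_const)))
      · exact continuous_norm.add (continuous_const.inner continuous_id)
    have hF_meas : ∀ᶠ t in nhds (0 : ℝ), AEStronglyMeasurable (FF t) F :=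
      Filter.Eventually.of_forall fun t => (hcont t).aestronglyMeasurable
    have hF_int : Integrable (FF 0) F := by
      refine (integrable_const (‖Q‖ + ‖u‖ * ‖Q‖)).mono'
        ((hcont 0).aestronglyMeasurable) ?_
      filter_upwards with x
      have h1 : |‖x - Q‖ - ‖x‖| ≤ ‖Q‖ := by
        simpa using abs_norm_sub_norm_le (x - Q) x
      have h2 : |⟪u, Q⟫| ≤ ‖u‖ * ‖Q‖ := abs_real_inner_le_norm u Q
      have hre : FF 0 x = (‖x - Q‖ - ‖x‖) - ⟪u, Q⟫ := by
        simp only [hFF_def, zero_smul, add_zero, inner_sub_right]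
        ring
      rw [Real.norm_eq_abs, hre]
      calc |(‖x - Q‖ - ‖x‖) - ⟪u, Q⟫| ≤ |‖x - Q‖ - ‖x‖| + |⟪u, Q⟫| := abs_sub _ _
        _ ≤ ‖Q‖ + ‖u‖ * ‖Q‖ := add_le_add h1 h2
    have hF'_meas : AEStronglyMeasurable F' F := by
      apply AEStronglyMeasurable.sub _ aestronglyMeasurable_const
      exact (((innerSL ℝ).flip v).continuous.comp_aestronglyMeasurable hgmeas).neg
    have h_lip : ∀ᵐ x ∂F, LipschitzOnWith (Real.nnabs (‖v‖ + ‖u‖ * ‖v‖))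
        (fun t => FF t x) (Metric.ball (0 : ℝ) 1) := by
      filter_upwards with x
      apply LipschitzWith.lipschitzOnWith
      apply LipschitzWith.of_dist_le_mul
      intro t s
      have hcoe : ((Real.nnabs (‖v‖ + ‖u‖ * ‖v‖)) : ℝ) = ‖v‖ + ‖u‖ * ‖v‖ := by
        rw [Real.coe_nnabs, abs_of_nonneg]
        positivity
      rw [hcoe, Real.dist_eq, Real.dist_eq]
      have hdiff : FF t x - FF s x =
          (‖x - (Q + t • v)‖ - ‖x - (Q + s • v)‖) + ⟪u, (s - t) • v⟫ := by
        simp only [hFF_def, inner_sub_right, inner_add_right, real_inner_smul_right,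
          inner_smul_right]
        ring
      have h1 : |‖x - (Q + t • v)‖ - ‖x - (Q + s • v)‖| ≤ |t - s| * ‖v‖ := by
        have := abs_norm_sub_norm_le (x - (Q + t • v)) (x - (Q + s • v))
        have heq : (x - (Q + t • v)) - (x - (Q + s • v)) = (s - t) • v := by
          rw [sub_smul]; abel
        rw [heq, norm_smul, Real.norm_eq_abs] at this
        calc |‖x - (Q + t • v)‖ - ‖x - (Q + s • v)‖| ≤ |s - t| * ‖v‖ := this
          _ = |t - s| * ‖v‖ := by rw [abs_sub_comm]
      have h2 : |⟪u, (s - t) • v⟫| ≤ ‖u‖ * (|t - s| * ‖v‖) := by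
        calc |⟪u, (s - t) • v⟫| ≤ ‖u‖ * ‖(s - t) • v‖ := abs_real_inner_le_norm _ _
          _ = ‖u‖ * (|t - s| * ‖v‖) := by
            rw [norm_smul, Real.norm_eq_abs, abs_sub_comm]
      calc |FF t x - FF s x| ≤ |‖x - (Q + t • v)‖ - ‖x - (Q + s • v)‖| + |⟪u, (s - t) • v⟫| := by
            rw [hdiff]; exact abs_add_le _ _
        _ ≤ |t - s| * ‖v‖ + ‖u‖ * (|t - s| * ‖v‖) := add_le_add h1 h2
        _ = (‖v‖ + ‖u‖ * ‖v‖) * |t - s| := by ring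
    have h_diff : ∀ᵐ x ∂F, HasDerivAt (fun t => FF t x) (F' x) 0 := by
      filter_upwards [hne] with x hx
      have hc : x - Q ≠ 0 := sub_ne_zero.mpr hx
      have hd1 : HasDerivAt (fun t : ℝ => ‖x - (Q + t • v)‖)
          (-⟪‖x - Q‖⁻¹ • (x - Q), v⟫) 0 := by
        have := hasDerivAt_norm_sub_smul (x - Q) v hc
        convert this using 2 with t
        rw [sub_add_eq_sub_sub]
      have hd2 : HasDerivAt (fun t : ℝ => ⟪u, x - (Q + t • v)⟫) (-⟪u, v⟫) 0 := by
        have heq : (fun t : ℝ => ⟪u, x - (Q + t • v)⟫)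
            = fun t : ℝ => ⟪u, x - Q⟫ - t * ⟪u, v⟫ := by
          funext t
          rw [sub_add_eq_sub_sub, inner_sub_right, real_inner_smul_right]
        rw [heq]
        simpa using (hasDerivAt_mul_const ⟪u, v⟫).const_sub ⟪u, x - Q⟫
      have := (hd1.add hd2).sub_const (‖x‖ + ⟪u, x⟫)
      convert this using 1
      show -⟪g x, v⟫ - ⟪u, v⟫ = _
      exact sub_eq_add_neg _ _
      all_goals rfl
    obtain ⟨hF'_int, hder⟩ := hasDerivAt_integral_of_dominated_loc_of_lip
      (Metric.ball_mem_nhds 0 one_pos) hF_meas hF_int hF'_meas h_lip (integrable_const _) h_diff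
    have hloc : IsLocalMin (fun t => ∫ x, FF t x ∂F) 0 := by
      apply Filter.Eventually.of_forall
      intro t
      have h0 : (fun t => ∫ x, FF t x ∂F) 0 =
          ∫ x, ((‖x - Q‖ + ⟪u, x - Q⟫) - (‖x‖ + ⟪u, x⟫)) ∂F := by
        simp [hFF_def]
      rw [h0]
      exact isMinOn_iff.mp hmin (Q + t • v) (Set.mem_univ _)
    have hzero : (∫ x, F' x ∂F) = 0 := hloc.hasDerivAt_eq_zero hder
    have hinner : Integrable (fun x => ⟪v, g x⟫) F :=
      ((innerSL ℝ v) : EuclideanSpace ℝ (Fin d) →L[ℝ] ℝ).integrable_comp hgint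
    have hsplit : (∫ x, F' x ∂F) = -(⟪v, ∫ x, g x ∂F⟫ + ⟪v, u⟫) := by
      have : (fun x => F' x) = fun x => -(⟪v, g x⟫ + ⟪v, u⟫) := by
        funext x
        rw [hF'_def, real_inner_comm (g x) v, real_inner_comm u v]
        ring
      rw [this, integral_neg, integral_add hinner (integrable_const _),
        integral_inner hgint, integral_const]
      simp
    rw [hsplit] at hzero
    have : ⟪v, (∫ x, g x ∂F) + u⟫ = 0 := by
      rw [inner_add_right]
      linarith [neg_eq_zero.mp hzero]
    rw [real_inner_comm] at this
    exact this
  have := key ((∫ x, g x ∂F) + u)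
  exact inner_self_eq_zero.mp this
end

section
/- Strict convexity and uniqueness of the spatial quantile: let d ≥ 2 and let x be a random vector in ℝ^d whose distribution is not concentrated on any straight line and satisfies P(x = z) = 0 for all z. Then for each u with ‖u‖ < 1, the function g(Q) = E[Φ(u, x − Q) − Φ(u, x)] is strictly convex on ℝ^d, and hence has at most one minimizer. -/
open RealInnerProductSpace MeasureTheory

/-- Strict convexity and uniqueness of the spatial quantile: for d ≥ 2, a
non-atomic distribution not concentrated on any straight line, and ‖u‖ < 1,
the objective g(Q) = E[Φ(u, x − Q) − Φ(u, x)] is strictly convex, hence has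
at most one minimizer. -/
theorem stmt17 {d : ℕ} (hd : 2 ≤ d)
    (μ : Measure (EuclideanSpace ℝ (Fin d))) [IsProbabilityMeasure μ]
    (hatom : ∀ z : EuclideanSpace ℝ (Fin d), μ {z} = 0)
    (hline : ¬ ∃ a v : EuclideanSpace ℝ (Fin d),
      μ {x | ∃ t : ℝ, x = a + t • v} = 1)
    (u : EuclideanSpace ℝ (Fin d)) (hu : ‖u‖ < 1) :
    StrictConvexOn ℝ Set.univ
      (fun Q : EuclideanSpace ℝ (Fin d) =>
        ∫ x, ((‖x - Q‖ + ⟪u, x - Q⟫) - (‖x‖ + ⟪u, x⟫)) ∂μ) ∧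
    ∀ Q₁ Q₂ : EuclideanSpace ℝ (Fin d),
      IsMinOn (fun Q : EuclideanSpace ℝ (Fin d) =>
          ∫ x, ((‖x - Q‖ + ⟪u, x - Q⟫) - (‖x‖ + ⟪u, x⟫)) ∂μ) Set.univ Q₁ →
      IsMinOn (fun Q : EuclideanSpace ℝ (Fin d) =>
          ∫ x, ((‖x - Q‖ + ⟪u, x - Q⟫) - (‖x‖ + ⟪u, x⟫)) ∂μ) Set.univ Q₂ →
      Q₁ = Q₂ := by
  have hint : ∀ Q : EuclideanSpace ℝ (Fin d),
      Integrable (fun x => (‖x - Q‖ + ⟪u, x - Q⟫) - (‖x‖ + ⟪u, x⟫)) μ := by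
    intro Q
    have hc : Continuous fun x : EuclideanSpace ℝ (Fin d) =>
        (‖x - Q‖ + ⟪u, x - Q⟫) - (‖x‖ + ⟪u, x⟫) := by
      apply Continuous.sub
      · exact ((continuous_id.sub continuous_const).norm).add
          (continuous_const.inner (continuous_id.sub continuous_const))
      · exact continuous_norm.add (continuous_const.inner continuous_id)
    refine Integrable.mono' (integrable_const (‖Q‖ + ‖u‖ * ‖Q‖))
      hc.aestronglyMeasurable ?_
    filter_upwards with x
    have h1 : (‖x - Q‖ + ⟪u, x - Q⟫) - (‖x‖ + ⟪u, x⟫) = (‖x - Q‖ - ‖x‖) - ⟪u, Q⟫ := by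
      simp only [inner_sub_right]; ring
    rw [h1, Real.norm_eq_abs]
    have h2 : |‖x - Q‖ - ‖x‖| ≤ ‖Q‖ := by
      have := abs_norm_sub_norm_le (x - Q) x
      simpa using this
    have h3 : |⟪u, Q⟫| ≤ ‖u‖ * ‖Q‖ := abs_real_inner_le_norm u Q
    calc |(‖x - Q‖ - ‖x‖) - ⟪u, Q⟫| ≤ |‖x - Q‖ - ‖x‖| + |⟪u, Q⟫| := abs_sub _ _
      _ ≤ ‖Q‖ + ‖u‖ * ‖Q‖ := add_le_add h2 h3
  have hsc : StrictConvexOn ℝ Set.univ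
      (fun Q : EuclideanSpace ℝ (Fin d) =>
        ∫ x, ((‖x - Q‖ + ⟪u, x - Q⟫) - (‖x‖ + ⟪u, x⟫)) ∂μ) := by
    refine ⟨convex_univ, ?_⟩
    rintro Q₁ - Q₂ - hne a b ha hb hab
    set mid : EuclideanSpace ℝ (Fin d) := a • Q₁ + b • Q₂ with hmid
    set D : EuclideanSpace ℝ (Fin d) → ℝ := fun x =>
      a * ((‖x - Q₁‖ + ⟪u, x - Q₁⟫) - (‖x‖ + ⟪u, x⟫))
      + b * ((‖x - Q₂‖ + ⟪u, x - Q₂⟫) - (‖x‖ + ⟪u, x⟫))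
      - ((‖x - mid‖ + ⟪u, x - mid⟫) - (‖x‖ + ⟪u, x⟫)) with hD
    have hDeq : ∀ x, D x = a * ‖x - Q₁‖ + b * ‖x - Q₂‖ - ‖x - mid‖ := by
      intro x
      simp only [hD, hmid, inner_sub_right, inner_add_right, real_inner_smul_right]
      linear_combination (-‖x‖ : ℝ) * hab
    have hkey : ∀ x : EuclideanSpace ℝ (Fin d),
        x - mid = a • (x - Q₁) + b • (x - Q₂) := by
      intro x; rw [hmid]; match_scalars <;> linarith
    have hDnonneg : ∀ x, 0 ≤ D x := by
      intro x
      rw [hDeq x]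
      have h := norm_add_le (a • (x - Q₁)) (b • (x - Q₂))
      rw [norm_smul, norm_smul, Real.norm_eq_abs, Real.norm_eq_abs,
        abs_of_pos ha, abs_of_pos hb] at h
      rw [hkey x]
      linarith
    set L : Set (EuclideanSpace ℝ (Fin d)) :=
      {x | ∃ t : ℝ, x = Q₁ + t • (Q₂ - Q₁)} with hL
    have hDpos : ∀ x ∉ L, 0 < D x := by
      intro x hx
      rw [hDeq x, hkey x]
      have hray : ¬ SameRay ℝ (a • (x - Q₁)) (b • (x - Q₂)) := by
        intro hsr
        rcases eq_or_ne (x - Q₁) 0 with h1 | h1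
        · exact hx ⟨0, by rw [← sub_eq_zero]; simpa using h1⟩
        rcases eq_or_ne (x - Q₂) 0 with h2 | h2
        · refine hx ⟨1, ?_⟩
          have hx2 : x = Q₂ := sub_eq_zero.mp h2
          rw [hx2]; module
        have ha1 : a • (x - Q₁) ≠ 0 := smul_ne_zero ha.ne' h1
        have hb2 : b • (x - Q₂) ≠ 0 := smul_ne_zero hb.ne' h2
        obtain ⟨r, hr, hre⟩ := hsr.exists_pos_left ha1 hb2
        have hb0 : (b : ℝ) ≠ 0 := hb.ne'
        obtain ⟨c, hc⟩ : ∃ c : ℝ, c • (x - Q₁) = x - Q₂ := by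
          refine ⟨b⁻¹ * (r * a), ?_⟩
          calc (b⁻¹ * (r * a)) • (x - Q₁) = b⁻¹ • ((r * a) • (x - Q₁)) := mul_smul _ _ _
            _ = b⁻¹ • (r • a • (x - Q₁)) := by rw [mul_smul]
            _ = b⁻¹ • (b • (x - Q₂)) := by rw [hre]
            _ = x - Q₂ := by rw [smul_smul, inv_mul_cancel₀ hb0, one_smul]
        have hc1 : c ≠ 1 := by
          intro h
          rw [h, one_smul] at hc
          exact hne (by rw [← sub_sub_cancel x Q₁, hc, sub_sub_cancel])
        have h1c : (1 : ℝ) - c ≠ 0 := sub_ne_zero.mpr (Ne.symm hc1)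
        refine hx ⟨(1 : ℝ) / (1 - c), ?_⟩
        have key : (1 - c) • x = (1 - c) • (Q₁ + ((1:ℝ) / (1 - c)) • (Q₂ - Q₁)) := by
          rw [smul_add, smul_smul, mul_one_div, div_self h1c, one_smul]
          have hc' : x - Q₂ = c • x - c • Q₁ := by rw [← hc]; module
          linear_combination (norm := module) hc'
        exact smul_right_injective (EuclideanSpace ℝ (Fin d)) h1c key
      have hlt := norm_add_lt_of_not_sameRay hray
      rw [norm_smul, norm_smul, Real.norm_eq_abs, Real.norm_eq_abs,
        abs_of_pos ha, abs_of_pos hb] at hlt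
      linarith
    have hLclosed : IsClosed L := by
      have hLe : L = (fun x : EuclideanSpace ℝ (Fin d) => x - Q₁) ⁻¹'
          (Submodule.span ℝ {Q₂ - Q₁} : Set (EuclideanSpace ℝ (Fin d))) := by
        ext x
        simp only [hL, Set.mem_setOf_eq, Set.mem_preimage, SetLike.mem_coe,
          Submodule.mem_span_singleton]
        constructor
        · rintro ⟨t, rfl⟩; exact ⟨t, by module⟩
        · rintro ⟨t, ht⟩; exact ⟨t, by rw [ht]; module⟩
      rw [hLe]
      exact (Submodule.closed_of_finiteDimensional _).preimage
        (continuous_id.sub continuous_const)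
    have hLcompl : 0 < μ Lᶜ := by
      rcases (zero_le : 0 ≤ μ Lᶜ).lt_or_eq with h | h
      · exact h
      exact absurd ⟨Q₁, Q₂ - Q₁,
        (prob_compl_eq_zero_iff hLclosed.measurableSet).mp h.symm⟩ hline
    have hDi : Integrable D μ :=
      (((hint Q₁).const_mul a).add ((hint Q₂).const_mul b)).sub (hint mid)
    have hDint : 0 < ∫ x, D x ∂μ := by
      rw [integral_pos_iff_support_of_nonneg hDnonneg hDi]
      refine lt_of_lt_of_le hLcompl (measure_mono ?_)
      intro x hx
      exact (hDpos x hx).ne'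
    have hsub : ∫ x, D x ∂μ
        = a * (∫ x, ((‖x - Q₁‖ + ⟪u, x - Q₁⟫) - (‖x‖ + ⟪u, x⟫)) ∂μ)
        + b * (∫ x, ((‖x - Q₂‖ + ⟪u, x - Q₂⟫) - (‖x‖ + ⟪u, x⟫)) ∂μ)
        - ∫ x, ((‖x - mid‖ + ⟪u, x - mid⟫) - (‖x‖ + ⟪u, x⟫)) ∂μ := by
      have hIa := (hint Q₁).const_mul a
      have hIb := (hint Q₂).const_mul b
      have e1 : ∫ x, D x ∂μ
          = (∫ x, (a * ((‖x - Q₁‖ + ⟪u, x - Q₁⟫) - (‖x‖ + ⟪u, x⟫))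
              + b * ((‖x - Q₂‖ + ⟪u, x - Q₂⟫) - (‖x‖ + ⟪u, x⟫))) ∂μ)
            - ∫ x, ((‖x - mid‖ + ⟪u, x - mid⟫) - (‖x‖ + ⟪u, x⟫)) ∂μ :=
        integral_sub (hIa.add hIb) (hint mid)
      have e2 : (∫ x, (a * ((‖x - Q₁‖ + ⟪u, x - Q₁⟫) - (‖x‖ + ⟪u, x⟫))
              + b * ((‖x - Q₂‖ + ⟪u, x - Q₂⟫) - (‖x‖ + ⟪u, x⟫))) ∂μ)
          = (∫ x, a * ((‖x - Q₁‖ + ⟪u, x - Q₁⟫) - (‖x‖ + ⟪u, x⟫)) ∂μ)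
            + ∫ x, b * ((‖x - Q₂‖ + ⟪u, x - Q₂⟫) - (‖x‖ + ⟪u, x⟫)) ∂μ :=
        integral_add hIa hIb
      rw [e1, e2, integral_const_mul, integral_const_mul]
    rw [hsub] at hDint
    simp only [smul_eq_mul]
    show (∫ x, ((‖x - mid‖ + ⟪u, x - mid⟫) - (‖x‖ + ⟪u, x⟫)) ∂μ)
      < a * (∫ x, ((‖x - Q₁‖ + ⟪u, x - Q₁⟫) - (‖x‖ + ⟪u, x⟫)) ∂μ)
      + b * (∫ x, ((‖x - Q₂‖ + ⟪u, x - Q₂⟫) - (‖x‖ + ⟪u, x⟫)) ∂μ)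
    linarith
  exact ⟨hsc, fun Q₁ Q₂ h1 h2 => hsc.eq_of_isMinOn h1 h2 (Set.mem_univ _) (Set.mem_univ _)⟩
end

section
/- Coercivity of the spatial quantile objective: let x be a random vector in ℝ^d and u ∈ ℝ^d with ‖u‖ < 1. Then g(Q) = E[Φ(u, x − Q) − Φ(u, x)] satisfies g(Q) → ∞ as ‖Q‖ → ∞; consequently a minimizer (the spatial u-quantile) exists. -/
open RealInnerProductSpace MeasureTheory Filter

section Aux

variable {d : ℕ} (μ : Measure (EuclideanSpace ℝ (Fin d))) [IsProbabilityMeasure μ]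
  (u : EuclideanSpace ℝ (Fin d))

lemma aux_int18 (Q : EuclideanSpace ℝ (Fin d)) :
    Integrable (fun x => ‖x - Q‖ - ‖x‖) μ := by
  refine Integrable.mono' (integrable_const ‖Q‖)
    (((continuous_id.sub continuous_const).norm.sub continuous_norm).aestronglyMeasurable)
    (ae_of_all _ fun x => ?_)
  have h := abs_norm_sub_norm_le (x - Q) x
  have : (x - Q) - x = -Q := by abel
  rw [this, norm_neg] at h
  simpa using h

lemma aux_eq18 (Q : EuclideanSpace ℝ (Fin d)) :
    ∫ x, ((‖x - Q‖ + ⟪u, x - Q⟫) - (‖x‖ + ⟪u, x⟫)) ∂μ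
      = (∫ x, (‖x - Q‖ - ‖x‖) ∂μ) - ⟪u, Q⟫ := by
  have hptw : ∀ x : EuclideanSpace ℝ (Fin d),
      ((‖x - Q‖ + ⟪u, x - Q⟫) - (‖x‖ + ⟪u, x⟫)) = (‖x - Q‖ - ‖x‖) - ⟪u, Q⟫ := by
    intro x
    rw [inner_sub_right]
    ring
  calc ∫ x, ((‖x - Q‖ + ⟪u, x - Q⟫) - (‖x‖ + ⟪u, x⟫)) ∂μ
      = ∫ x, ((‖x - Q‖ - ‖x‖) - ⟪u, Q⟫) ∂μ := by simp_rw [hptw]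
    _ = (∫ x, (‖x - Q‖ - ‖x‖) ∂μ) - ∫ _x, ⟪u, Q⟫ ∂μ :=
        integral_sub (aux_int18 μ Q) (integrable_const _)
    _ = (∫ x, (‖x - Q‖ - ‖x‖) ∂μ) - ⟪u, Q⟫ := by simp

lemma aux_lip18 : LipschitzWith 1 (fun Q => ∫ x, (‖x - Q‖ - ‖x‖) ∂μ) := by
  refine LipschitzWith.of_dist_le_mul fun Q Q' => ?_
  simp only [NNReal.coe_one, one_mul, Real.dist_eq]
  have hdiff : (∫ x, (‖x - Q‖ - ‖x‖) ∂μ) - ∫ x, (‖x - Q'‖ - ‖x‖) ∂μ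
      = ∫ x, ((‖x - Q‖ - ‖x‖) - (‖x - Q'‖ - ‖x‖)) ∂μ :=
    (integral_sub (aux_int18 μ Q) (aux_int18 μ Q')).symm
  rw [hdiff]
  have hb : ∀ x : EuclideanSpace ℝ (Fin d),
      ‖(‖x - Q‖ - ‖x‖) - (‖x - Q'‖ - ‖x‖)‖ ≤ dist Q Q' := by
    intro x
    have h := abs_norm_sub_norm_le (x - Q) (x - Q')
    have : (x - Q) - (x - Q') = Q' - Q := by abel
    rw [this] at h
    have heq2 : (‖x - Q‖ - ‖x‖) - (‖x - Q'‖ - ‖x‖) = ‖x - Q‖ - ‖x - Q'‖ := by ring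
    rw [Real.norm_eq_abs, heq2, dist_eq_norm']
    exact h
  calc ‖∫ x, ((‖x - Q‖ - ‖x‖) - (‖x - Q'‖ - ‖x‖)) ∂μ‖
      ≤ dist Q Q' * (μ Set.univ).toReal :=
        norm_integral_le_of_norm_le_const (ae_of_all _ hb)
    _ = dist Q Q' := by simp

lemma aux_key18 (hu : ‖u‖ < 1) :
    ∃ R : ℝ, 0 ≤ R ∧ ∀ Q : EuclideanSpace ℝ (Fin d),
      ((1 - ‖u‖) / 2) * ‖Q‖ - 2 * R ≤
        ∫ x, ((‖x - Q‖ + ⟪u, x - Q⟫) - (‖x‖ + ⟪u, x⟫)) ∂μ := by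
  set ε : ℝ := (1 - ‖u‖) / 4 with hε
  have hε0 : 0 < ε := by rw [hε]; linarith
  -- find R with μ (closedBall 0 R) close to 1
  have hunion : (⋃ n : ℕ, Metric.closedBall (0 : EuclideanSpace ℝ (Fin d)) n) = Set.univ := by
    ext x
    simp only [Set.mem_iUnion, Metric.mem_closedBall, Set.mem_univ, iff_true,
      dist_zero_right]
    obtain ⟨n, hn⟩ := exists_nat_ge ‖x‖
    exact ⟨n, hn⟩
  have hmono : Monotone fun n : ℕ => Metric.closedBall (0 : EuclideanSpace ℝ (Fin d)) n := by
    intro m n hmn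
    exact Metric.closedBall_subset_closedBall (by exact_mod_cast hmn)
  have htend := tendsto_measure_iUnion_atTop (μ := μ) hmono
  rw [hunion, measure_univ] at htend
  have htendr : Tendsto (fun n : ℕ =>
      (μ (Metric.closedBall (0 : EuclideanSpace ℝ (Fin d)) n)).toReal) atTop (nhds 1) := by
    have := (ENNReal.tendsto_toReal (by norm_num : (1 : ENNReal) ≠ ⊤)).comp htend
    simpa [Function.comp_def] using this
  have hev := htendr.eventually_const_lt (by linarith : 1 - ε < 1)
  obtain ⟨n, hn⟩ := hev.exists
  refine ⟨(n : ℝ), Nat.cast_nonneg n, fun Q => ?_⟩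
  set R : ℝ := (n : ℝ)
  set A : Set (EuclideanSpace ℝ (Fin d)) := Metric.closedBall 0 R with hAdef
  have hA : MeasurableSet A := measurableSet_closedBall
  set a : ℝ := (μ A).toReal with hadef
  have ha1 : 1 - ε < a := hn
  have ha_le : a ≤ 1 := by
    rw [hadef]
    exact ENNReal.toReal_le_of_le_ofReal zero_le_one (by simpa using prob_le_one)
  have hacompl : (μ Aᶜ).toReal = 1 - a := by
    rw [measure_compl hA (measure_ne_top μ A), measure_univ]
    rw [ENNReal.toReal_sub_of_le prob_le_one (by norm_num)]
    simp [hadef]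
  -- split the integral
  have hint := aux_int18 μ Q
  have hsplit : (∫ x in A, (‖x - Q‖ - ‖x‖) ∂μ) + ∫ x in Aᶜ, (‖x - Q‖ - ‖x‖) ∂μ
      = ∫ x, (‖x - Q‖ - ‖x‖) ∂μ := integral_add_compl hA hint
  have hbd1 : (‖Q‖ - 2 * R) * a ≤ ∫ x in A, (‖x - Q‖ - ‖x‖) ∂μ := by
    have : ∫ x in A, (‖Q‖ - 2 * R) ∂μ ≤ ∫ x in A, (‖x - Q‖ - ‖x‖) ∂μ := by
      refine setIntegral_mono_on (integrableOn_const (measure_ne_top μ A))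
        hint.integrableOn hA fun x hx => ?_
      have hx' : ‖x‖ ≤ R := by simpa [dist_zero_right] using Metric.mem_closedBall.1 hx
      have h1 : ‖Q‖ - ‖x‖ ≤ ‖Q - x‖ := norm_sub_norm_le Q x
      rw [norm_sub_rev] at h1
      linarith
    rw [setIntegral_const] at this
    calc (‖Q‖ - 2 * R) * a = a * (‖Q‖ - 2 * R) := by ring
      _ = (μ A).toReal • (‖Q‖ - 2 * R) := by rw [hadef]; rfl
      _ ≤ _ := this
  have hbd2 : (-‖Q‖) * (1 - a) ≤ ∫ x in Aᶜ, (‖x - Q‖ - ‖x‖) ∂μ := by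
    have : ∫ x in Aᶜ, (-‖Q‖) ∂μ ≤ ∫ x in Aᶜ, (‖x - Q‖ - ‖x‖) ∂μ := by
      refine setIntegral_mono_on (integrableOn_const (measure_ne_top μ Aᶜ))
        hint.integrableOn hA.compl fun x _ => ?_
      have h := abs_norm_sub_norm_le (x - Q) x
      have hh : (x - Q) - x = -Q := by abel
      rw [hh, norm_neg] at h
      have := abs_le.1 h
      linarith [this.1]
    rw [setIntegral_const, measureReal_def, hacompl] at this
    calc (-‖Q‖) * (1 - a) = (1 - a) • (-‖Q‖) := by rw [smul_eq_mul]; ring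
      _ ≤ _ := this
  have hinner : ⟪u, Q⟫ ≤ ‖u‖ * ‖Q‖ := real_inner_le_norm u Q
  rw [aux_eq18 μ u Q]
  have hQ0 : (0 : ℝ) ≤ ‖Q‖ := norm_nonneg Q
  have hR0 : (0 : ℝ) ≤ R := Nat.cast_nonneg n
  have hmain : (‖Q‖ - 2 * R) * a + (-‖Q‖) * (1 - a) ≤ ∫ x, (‖x - Q‖ - ‖x‖) ∂μ := by
    rw [← hsplit]; linarith
  -- arithmetic
  nlinarith [hmain, hinner, hQ0, hR0, ha1, ha_le, hε0]

end Aux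

/-- Coercivity of the spatial quantile objective: for ‖u‖ < 1, the objective
g(Q) = E[Φ(u, x − Q) − Φ(u, x)] tends to ∞ as ‖Q‖ → ∞, and consequently a
minimizer (the spatial u-quantile) exists. -/
theorem stmt18 {d : ℕ} (μ : Measure (EuclideanSpace ℝ (Fin d)))
    [IsProbabilityMeasure μ]
    (u : EuclideanSpace ℝ (Fin d)) (hu : ‖u‖ < 1) :
    Tendsto
      (fun Q : EuclideanSpace ℝ (Fin d) =>
        ∫ x, ((‖x - Q‖ + ⟪u, x - Q⟫) - (‖x‖ + ⟪u, x⟫)) ∂μ)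
      (comap norm atTop) atTop ∧
    ∃ Q : EuclideanSpace ℝ (Fin d),
      IsMinOn (fun Q' : EuclideanSpace ℝ (Fin d) =>
        ∫ x, ((‖x - Q'‖ + ⟪u, x - Q'⟫) - (‖x‖ + ⟪u, x⟫)) ∂μ) Set.univ Q := by
  obtain ⟨R, hR0, hkey⟩ := aux_key18 μ u hu
  set c : ℝ := (1 - ‖u‖) / 2 with hc
  have hc0 : 0 < c := by rw [hc]; linarith
  set g : EuclideanSpace ℝ (Fin d) → ℝ := fun Q =>
    ∫ x, ((‖x - Q‖ + ⟪u, x - Q⟫) - (‖x‖ + ⟪u, x⟫)) ∂μ with hg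
  -- continuity of g
  have hgcont : Continuous g := by
    have heq : g = fun Q => (∫ x, (‖x - Q‖ - ‖x‖) ∂μ) - ⟪u, Q⟫ := by
      funext Q; exact aux_eq18 μ u Q
    rw [heq]
    exact ((aux_lip18 μ).continuous).sub (continuous_const.inner continuous_id)
  constructor
  · -- coercivity
    refine tendsto_atTop_mono (fun Q => hkey Q) ?_
    have hnorm : Tendsto (fun Q : EuclideanSpace ℝ (Fin d) => ‖Q‖) (comap norm atTop) atTop :=
      tendsto_comap
    simpa [sub_eq_add_neg] using
      tendsto_atTop_add_const_right _ (-(2 * R)) (hnorm.const_mul_atTop hc0)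
  · -- existence of minimizer
    set M : ℝ := max 0 ((g 0 + 2 * R) / c) with hM
    have hM0 : 0 ≤ M := le_max_left _ _
    have hcomp : IsCompact (Metric.closedBall (0 : EuclideanSpace ℝ (Fin d)) M) :=
      isCompact_closedBall 0 M
    have hne : (Metric.closedBall (0 : EuclideanSpace ℝ (Fin d)) M).Nonempty :=
      ⟨0, Metric.mem_closedBall_self hM0⟩
    obtain ⟨Q, hQmem, hQmin⟩ := hcomp.exists_isMinOn hne hgcont.continuousOn
    refine ⟨Q, ?_⟩
    intro Q' _
    by_cases hQ' : ‖Q'‖ ≤ M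
    · exact hQmin (by simpa [Metric.mem_closedBall, dist_zero_right] using hQ')
    · push_neg at hQ'
      have h0mem : (0 : EuclideanSpace ℝ (Fin d)) ∈ Metric.closedBall (0 : EuclideanSpace ℝ (Fin d)) M :=
        Metric.mem_closedBall_self hM0
      have hg0 : g Q ≤ g 0 := hQmin h0mem
      have hge : c * ‖Q'‖ - 2 * R ≤ g Q' := hkey Q'
      have hdiv : (g 0 + 2 * R) / c ≤ M := le_max_right _ _
      have : g 0 + 2 * R ≤ c * M := by
        rw [div_le_iff₀ hc0] at hdiv; linarith [hdiv]
      have : c * M < c * ‖Q'‖ := by exact (mul_lt_mul_iff_right₀ hc0).2 hQ'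
      simp only [Set.mem_setOf_eq]
      calc g Q ≤ g 0 := hg0
        _ ≤ c * M - 2 * R := by linarith
        _ ≤ c * ‖Q'‖ - 2 * R := by linarith
        _ ≤ g Q' := hge
end
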